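/- Let r, J be nonnegative integers and let α = x + iy with x, y real, x ≥ 0 and |y| ≤ x. Then there is a constant C = C(r,J) (independent of α) such that |e^α · d^J/dα^J [e^{rα}/(1+e^α)^{r+1}]| ≤ C. -/

import Mathlib

open Complex
-- basis function
noncomputable def bfun (k m : ℕ) (β : ℂ) : ℂ :=
  Complex.exp (-((k : ℂ) + 1) * β) * ((1 + Complex.exp (-β))⁻¹) ^ m

lemma hasDerivAt_bfun (k m : ℕ) (β : ℂ) (hβ : 1 + Complex.exp (-β) ≠ 0) :
    HasDerivAt (bfun k m)
      (-((k : ℂ) + 1) * bfun k m β + (m : ℂ) * bfun (k + 1) (m + 1) β) β := by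
  have hc : HasDerivAt (fun β : ℂ => 1 + Complex.exp (-β)) (-Complex.exp (-β)) β := by
    have := ((hasDerivAt_neg β).cexp)
    simpa using this.const_add 1
  have hw : HasDerivAt (fun β : ℂ => (1 + Complex.exp (-β))⁻¹)
      (Complex.exp (-β) * ((1 + Complex.exp (-β))⁻¹) ^ 2) β := by
    have := hc.inv hβ
    refine this.congr_deriv ?_
    rw [neg_neg, div_eq_mul_inv, inv_pow]
  have hwm := hw.pow m
  have he : HasDerivAt (fun β : ℂ => Complex.exp (-((k : ℂ) + 1) * β))
      (-((k : ℂ) + 1) * Complex.exp (-((k : ℂ) + 1) * β)) β := by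
    have := ((hasDerivAt_id β).const_mul (-((k : ℂ) + 1))).cexp
    simpa [mul_comm] using this
  have H := he.mul hwm
  refine (H.congr_deriv ?_).congr_of_eventuallyEq (Filter.Eventually.of_forall fun _ => rfl)
  symm
  simp only [bfun, Pi.pow_apply]
  push_cast
  cases m with
  | zero => simp
  | succ n => simp only [Nat.add_sub_cancel]; push_cast; ring_nf; rw [← Complex.exp_add]; ring_nf

noncomputable def Sfun (L : List (ℂ × ℕ × ℕ)) (β : ℂ) : ℂ :=
  (L.map (fun t => t.1 * bfun t.2.1 t.2.2 β)).sum

def stepL (L : List (ℂ × ℕ × ℕ)) : List (ℂ × ℕ × ℕ) :=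
  L.flatMap (fun t => [(-((t.2.1 : ℂ) + 1) * t.1, t.2.1, t.2.2),
                    ((t.2.2 : ℂ) * t.1, t.2.1 + 1, t.2.2 + 1)])

lemma hasDerivAt_Sfun (L : List (ℂ × ℕ × ℕ)) (β : ℂ) (hβ : 1 + Complex.exp (-β) ≠ 0) :
    HasDerivAt (Sfun L) (Sfun (stepL L) β) β := by
  induction L with
  | nil => exact (hasDerivAt_const β (0 : ℂ)).congr_deriv (by simp [Sfun, stepL])
  | cons t L ih =>
    obtain ⟨c, k, m⟩ := t
    have hb := (hasDerivAt_bfun k m β hβ).const_mul c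
    have H := hb.add ih
    have heq : Sfun ((c, k, m) :: L) = fun β => c * bfun k m β + Sfun L β := by
      funext β; simp [Sfun]
    rw [heq]
    refine H.congr_deriv ?_
    symm
    simp [Sfun, stepL]
    ring

lemma base_case (r : ℕ) (β : ℂ) (hβ : 1 + Complex.exp (-β) ≠ 0) :
    Complex.exp (r * β) / (1 + Complex.exp β) ^ (r + 1) = bfun 0 (r + 1) β := by
  have key : Complex.exp β * (1 + Complex.exp (-β)) = 1 + Complex.exp β := by
    rw [mul_add, mul_one, ← Complex.exp_add]
    simp [add_comm]
  have h1 : (1 + Complex.exp β) ^ (r + 1)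
      = Complex.exp β ^ (r + 1) * (1 + Complex.exp (-β)) ^ (r + 1) := by
    rw [← mul_pow, key]
  have hr : Complex.exp (r * β) = Complex.exp β ^ r := by
    rw [← Complex.exp_nat_mul]
  rw [h1, hr]
  simp only [bfun]
  rw [show -(((0:ℕ):ℂ) + 1) * β = -β by push_cast; ring, Complex.exp_neg]
  rw [pow_succ, inv_pow]
  field_simp

lemma rep (r J : ℕ) : ∃ L : List (ℂ × ℕ × ℕ), ∀ β : ℂ, 1 + Complex.exp (-β) ≠ 0 →
    iteratedDeriv J (fun β : ℂ => Complex.exp (r * β) / (1 + Complex.exp β) ^ (r + 1)) β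
      = Sfun L β := by
  induction J with
  | zero =>
    refine ⟨[(1, 0, r + 1)], fun β hβ => ?_⟩
    simp [Sfun, iteratedDeriv_zero, base_case r β hβ]
  | succ J ih =>
    obtain ⟨L, hL⟩ := ih
    refine ⟨stepL L, fun β hβ => ?_⟩
    rw [iteratedDeriv_succ]
    have hopen : IsOpen {β : ℂ | 1 + Complex.exp (-β) ≠ 0} := by
      have : Continuous fun β : ℂ => 1 + Complex.exp (-β) := by continuity
      exact isOpen_compl_singleton.preimage this
    have hev : (iteratedDeriv J (fun β : ℂ => Complex.exp (r * β) / (1 + Complex.exp β) ^ (r + 1)))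
        =ᶠ[nhds β] Sfun L := by
      filter_upwards [hopen.mem_nhds hβ] with b hb using hL b hb
    rw [hev.deriv_eq, (hasDerivAt_Sfun L β hβ).deriv]

lemma lower_bound (x y : ℝ) (hx : 0 ≤ x) (hy : |y| ≤ x) :
    3 / 4 ≤ ‖1 + Complex.exp (-((x : ℂ) + y * Complex.I))‖ := by
  have hre : (-((x : ℂ) + y * Complex.I)).re = -x := by simp
  have him : (-((x : ℂ) + y * Complex.I)).im = -y := by simp
  have habs : ‖Complex.exp (-((x : ℂ) + y * Complex.I))‖ = Real.exp (-x) := by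
    rw [Complex.norm_exp, hre]
  by_cases hc : 0 ≤ Real.cos y
  · have hre2 : (1 + Complex.exp (-((x : ℂ) + y * Complex.I))).re
        = 1 + Real.exp (-x) * Real.cos y := by
      rw [Complex.add_re, Complex.exp_re, hre, him, Real.cos_neg]
      norm_num
    have h1 : (1:ℝ) ≤ (1 + Complex.exp (-((x : ℂ) + y * Complex.I))).re := by
      rw [hre2]; nlinarith [Real.exp_pos (-x)]
    have := Complex.re_le_norm (1 + Complex.exp (-((x : ℂ) + y * Complex.I)))
    linarith
  · push_neg at hc
    have hy2 : Real.pi / 2 < |y| := by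
      by_contra h
      push_neg at h
      rw [abs_le] at h
      exact absurd (Real.cos_nonneg_of_mem_Icc ⟨by linarith [h.1], h.2⟩) (not_le.mpr hc)
    have hxbig : (3:ℝ)/2 < x := by
      have := Real.pi_gt_three
      linarith
    have hsmall : Real.exp (-x) < 1/4 := by
      rw [Real.exp_neg]
      rw [show (1:ℝ)/4 = 4⁻¹ by norm_num, inv_lt_inv₀ (Real.exp_pos x) (by norm_num)]
      calc (4:ℝ) < Real.exp 1 * Real.exp (1/2) := by
              nlinarith [Real.exp_one_gt_d9, Real.add_one_le_exp (1/2 : ℝ)]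
        _ = Real.exp (3/2) := by rw [← Real.exp_add]; norm_num
        _ < Real.exp x := Real.exp_lt_exp.mpr (by linarith)
    have htri := norm_add_le (1 + Complex.exp (-((x : ℂ) + y * Complex.I)))
      (-(Complex.exp (-((x : ℂ) + y * Complex.I))))
    rw [add_neg_cancel_right, norm_neg, habs, norm_one] at htri
    linarith

lemma sum_bound (L : List (ℂ × ℕ × ℕ)) (α : ℂ) (hre : 0 ≤ α.re)
    (hlb : 3 / 4 ≤ ‖1 + Complex.exp (-α)‖) :
    ‖Complex.exp α * Sfun L α‖
      ≤ (L.map (fun t => ‖t.1‖ * (4 / 3 : ℝ) ^ t.2.2)).sum := by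
  induction L with
  | nil => simp [Sfun]
  | cons t L ih =>
    obtain ⟨c, k, m⟩ := t
    have hterm : ‖Complex.exp α * (c * bfun k m α)‖
        ≤ ‖c‖ * (4 / 3 : ℝ) ^ m := by
      have hkey : Complex.exp α * Complex.exp (-((k : ℂ) + 1) * α)
          = Complex.exp (-(k : ℂ) * α) := by
        rw [← Complex.exp_add]; ring_nf
      have h1 : ‖Complex.exp (-(k : ℂ) * α)‖ ≤ 1 := by
        rw [Complex.norm_exp]
        refine Real.exp_le_one_iff.mpr ?_
        have : (-(k : ℂ) * α).re = -(k : ℝ) * α.re := by simp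
        rw [this]
        nlinarith [Nat.cast_nonneg (α := ℝ) k]
      have h2 : ‖(1 + Complex.exp (-α))⁻¹‖ ≤ 4 / 3 := by
        rw [norm_inv]
        rw [inv_le_comm₀ (by linarith) (by norm_num)]
        linarith
      calc ‖Complex.exp α * (c * bfun k m α)‖
          = ‖c‖ * (‖Complex.exp (-(k : ℂ) * α)‖
              * ‖(1 + Complex.exp (-α))⁻¹‖ ^ m) := by
            rw [show Complex.exp α * (c * bfun k m α)
                = c * ((Complex.exp α * Complex.exp (-((k : ℂ) + 1) * α))
                    * ((1 + Complex.exp (-α))⁻¹) ^ m) by rw [bfun]; ring, hkey]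
            simp [map_mul, map_pow]
        _ ≤ ‖c‖ * (1 * (4 / 3 : ℝ) ^ m) := by
            gcongr
        _ = ‖c‖ * (4 / 3 : ℝ) ^ m := by ring
    calc ‖Complex.exp α * Sfun ((c, k, m) :: L) α‖
        ≤ ‖Complex.exp α * (c * bfun k m α)‖
            + ‖Complex.exp α * Sfun L α‖ := by
          rw [show Complex.exp α * Sfun ((c, k, m) :: L) α
              = Complex.exp α * (c * bfun k m α) + Complex.exp α * Sfun L α by
            simp [Sfun]; ring]
          exact norm_add_le _ _
      _ ≤ ‖c‖ * (4 / 3 : ℝ) ^ m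
            + (L.map (fun t => ‖t.1‖ * (4 / 3 : ℝ) ^ t.2.2)).sum :=
          add_le_add hterm ih
      _ = (((c, k, m) :: L).map (fun t => ‖t.1‖ * (4 / 3 : ℝ) ^ t.2.2)).sum := by
          simp



/-- For `α = x + iy` with `x ≥ 0`, `|y| ≤ x`:
`|e^α ∂_α^J [e^{rα}/(1+e^α)^{r+1}]| ≤ C(r,J)` uniformly in `α`. -/
theorem bounded_exp_mul_iteratedDeriv (r J : ℕ) :
    ∃ C : ℝ, ∀ x y : ℝ, 0 ≤ x → |y| ≤ x →
      ‖Complex.exp (x + y * Complex.I) *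
        iteratedDeriv J
          (fun β : ℂ => Complex.exp (r * β) / (1 + Complex.exp β) ^ (r + 1))
          (x + y * Complex.I)‖ ≤ C := by

  obtain ⟨L, hL⟩ := rep r J
  refine ⟨(L.map (fun t => ‖t.1‖ * (4 / 3 : ℝ) ^ t.2.2)).sum, fun x y hx hy => ?_⟩
  have hlb := lower_bound x y hx hy
  have hne : 1 + Complex.exp (-((x : ℂ) + y * Complex.I)) ≠ 0 := by
    intro h
    rw [h] at hlb
    simp at hlb
    linarith
  rw [hL _ hne]
  exact sum_bound L _ (by simp [hx]) hlb
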